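/- Let w, z ∈ A⁺, let z₀ be the longest prefix of z belonging to L (the first coordinate of z) and let w_m be the longest suffix of w belonging to L (the last coordinate of w). Then f̂(wz) = f̂(wz₀) · f(z₀)⁻¹ · f̂(z) and f̂(wz) = f̂(w) · f(w_m)⁻¹ · f̂(w_m z) in the group G. -/

import Mathlib

open List

variable {A : Type*} {G : Type*} {A_G : Type*}

/-- `L̈`: the words not in `L` whose maximal proper prefix and suffix are in `L`. -/
def Ddot (L : Set (List A)) : Set (List A) :=
  {v | v ∉ L ∧ v.dropLast ∈ L ∧ v.tail ∈ L}

/-- `IsSc L w s` : `s` is the sequence of coordinates of `w` determined by `L`,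
via the recursive construction of the paper: if `w ∈ L` then `s = (w)`; otherwise
select an occurrence `w = w' v w''` of a factor `v ∈ L̈` and put
`s = sc_L[w' v_α] (v) sc_L[v_ω w'']`. -/
inductive IsSc (L : Set (List A)) : List A → List (List A) → Prop
  | base (w : List A) (hw : w ∈ L) : IsSc L w [w]
  | step (w' w'' v : List A) (s₁ s₂ : List (List A)) (hv : v ∈ Ddot L)
      (h₁ : IsSc L (w' ++ v.dropLast) s₁) (h₂ : IsSc L (v.tail ++ w'') s₂) :
      IsSc L (w' ++ v ++ w'') (s₁ ++ v :: s₂)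

open Classical in
/-- `sc_L[w]`, the sequence of coordinates of `w` determined by `L`. -/
noncomputable def scL (L : Set (List A)) (w : List A) : List (List A) :=
  if h : ∃ s, IsSc L w s then h.choose else []

section Aux

variable {L : Set (List A)}

lemma ddot_ne_nil (hE : [] ∉ L) {v : List A} (hv : v ∈ Ddot L) : v ≠ [] := by
  rintro rfl; exact hE hv.2.1

lemma ddot_tail_ne_nil (hA : ∀ a : A, [a] ∈ L) {v : List A} (hv : v ∈ Ddot L) :
    v.tail ≠ [] := by
  intro h
  rcases v with _ | ⟨a, t⟩
  · exact hv.1 hv.2.1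
  · simp only [tail_cons] at h; subst h; exact hv.1 (hA a)

lemma ddot_dropLast_ne_nil (hA : ∀ a : A, [a] ∈ L) {v : List A} (hv : v ∈ Ddot L) :
    v.dropLast ≠ [] := by
  have h := ddot_tail_ne_nil hA hv
  intro h'
  apply h
  have h1 : v.dropLast.length = 0 := by rw [h']; rfl
  have h2 : v.tail.length = 0 := by
    rw [length_tail]; rw [length_dropLast] at h1; omega
  exact List.eq_nil_of_length_eq_zero h2

lemma tail_prefix_of_prefix {l₁ l₂ : List A} (h : l₁ <+: l₂) : l₁.tail <+: l₂.tail := by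
  obtain ⟨r, rfl⟩ := h
  cases l₁ with
  | nil => simp
  | cons a t => simp

lemma isSc_ne_nil {u : List A} {s : List (List A)} (h : IsSc L u s) : s ≠ [] := by
  cases h with
  | base => simp
  | step => simp

/-- Inversion principle for `IsSc`. -/
lemma isSc_inv {u : List A} {s : List (List A)} (h : IsSc L u s) :
    (u ∈ L ∧ s = [u]) ∨
    ∃ w' w'' v s₁ s₂, v ∈ Ddot L ∧ IsSc L (w' ++ v.dropLast) s₁ ∧
      IsSc L (v.tail ++ w'') s₂ ∧ u = w' ++ v ++ w'' ∧ s = s₁ ++ v :: s₂ := by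
  cases h with
  | base w hw => exact Or.inl ⟨hw, rfl⟩
  | step w' w'' v s₁ s₂ hv h₁ h₂ => exact Or.inr ⟨w', w'', v, s₁, s₂, hv, h₁, h₂, rfl, rfl⟩

lemma exists_ddot_aux (hE : [] ∉ L) (hA : ∀ a : A, [a] ∈ L) :
    ∀ n (u : List A), u.length ≤ n → u ≠ [] → u ∉ L →
      ∃ w' v w'', v ∈ Ddot L ∧ w' ++ v ++ w'' = u := by
  intro n
  induction n with
  | zero =>
    intro u hlen hne
    exact absurd (List.eq_nil_of_length_eq_zero (Nat.le_zero.mp hlen)) hne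
  | succ n ih =>
    intro u hlen hne huL
    by_cases h1 : u.dropLast ∈ L
    · by_cases h2 : u.tail ∈ L
      · exact ⟨[], u, [], ⟨huL, h1, h2⟩, by simp⟩
      · have htne : u.tail ≠ [] := by
          intro h
          rcases u with _ | ⟨a, t⟩
          · exact hne rfl
          · simp only [tail_cons] at h; subst h; exact huL (hA a)
        have hlt : u.tail.length ≤ n := by
          rw [length_tail]
          have : 1 ≤ u.length := List.length_pos_iff.mpr hne
          omega
        obtain ⟨w', v, w'', hv, heq⟩ := ih u.tail hlt htne h2
        refine ⟨u.head hne :: w', v, w'', hv, ?_⟩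
        rw [cons_append, cons_append, heq]
        exact List.cons_head_tail hne
    · have hdne : u.dropLast ≠ [] := by
        intro h
        have : u.length ≤ 1 := by
          have := congrArg List.length h
          rw [length_dropLast] at this
          simp at this; omega
        interval_cases h' : u.length
        · exact hne (List.eq_nil_of_length_eq_zero h')
        · obtain ⟨a, ha⟩ := List.length_eq_one_iff.mp h'
          subst ha; exact huL (hA a)
      have hlt : u.dropLast.length ≤ n := by
        rw [length_dropLast]
        have : 1 ≤ u.length := List.length_pos_iff.mpr hne
        omega
      obtain ⟨w', v, w'', hv, heq⟩ := ih u.dropLast hlt hdne h1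
      refine ⟨w', v, w'' ++ [u.getLast hne], hv, ?_⟩
      conv_rhs => rw [← List.dropLast_append_getLast hne]
      rw [← heq]; simp

lemma exists_sc_aux (hE : [] ∉ L) (hA : ∀ a : A, [a] ∈ L) :
    ∀ n (u : List A), u.length ≤ n → u ≠ [] → ∃ s, IsSc L u s := by
  intro n
  induction n with
  | zero =>
    intro u hlen hne
    exact absurd (List.eq_nil_of_length_eq_zero (Nat.le_zero.mp hlen)) hne
  | succ n ih =>
    intro u hlen hne
    by_cases hu : u ∈ L
    · exact ⟨[u], .base u hu⟩
    · obtain ⟨w', v, w'', hv, rfl⟩ := exists_ddot_aux hE hA (n + 1) u hlen hne hu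
      have hvd := ddot_dropLast_ne_nil hA hv
      have hvt := ddot_tail_ne_nil hA hv
      have hv1 : 1 ≤ v.length := List.length_pos_iff.mpr (ddot_ne_nil hE hv)
      simp only [length_append] at hlen
      obtain ⟨s₁, h₁⟩ := ih (w' ++ v.dropLast)
        (by simp only [length_append, length_dropLast]; omega)
        (fun h => hvd (List.append_eq_nil_iff.mp h).2)
      obtain ⟨s₂, h₂⟩ := ih (v.tail ++ w'')
        (by simp only [length_append, length_tail]; omega)
        (fun h => hvt (List.append_eq_nil_iff.mp h).1)
      exact ⟨_, .step w' w'' v s₁ s₂ hv h₁ h₂⟩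

lemma exists_sc (hE : [] ∉ L) (hA : ∀ a : A, [a] ∈ L) (u : List A) (hne : u ≠ []) :
    ∃ s, IsSc L u s :=
  exists_sc_aux hE hA u.length u le_rfl hne

lemma ddot_not_infix (hFac : ∀ u w : List A, w ∈ L → u ≠ [] → u <:+: w → u ∈ L)
    (hE : [] ∉ L) {v w : List A} (hv : v ∈ Ddot L) (hinf : v <:+: w) (hw : w ∈ L) :
    False :=
  hv.1 (hFac v w hw (ddot_ne_nil hE hv) hinf)

/-- The asymmetric key step for uniqueness. -/
lemma step_lt (hE : [] ∉ L)
    (hFac : ∀ u w : List A, w ∈ L → u ≠ [] → u <:+: w → u ∈ L)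
    (hA : ∀ a : A, [a] ∈ L)
    (w₁ v₁ x₁ w₂ v₂ x₂ : List A) (s₁ t₁ s₂ t₂ : List (List A))
    (hv₁ : v₁ ∈ Ddot L) (hv₂ : v₂ ∈ Ddot L)
    (heq : w₁ ++ v₁ ++ x₁ = w₂ ++ v₂ ++ x₂)
    (hlt : w₁.length < w₂.length)
    (IH : ∀ u' : List A, u'.length < (w₁ ++ v₁ ++ x₁).length →
      ∀ s t : List (List A), IsSc L u' s → IsSc L u' t → s = t)
    (ha₁ : IsSc L (w₁ ++ v₁.dropLast) s₁) (hb₁ : IsSc L (v₁.tail ++ x₁) t₁)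
    (ha₂ : IsSc L (w₂ ++ v₂.dropLast) s₂) (hb₂ : IsSc L (v₂.tail ++ x₂) t₂) :
    s₁ ++ v₁ :: t₁ = s₂ ++ v₂ :: t₂ := by
  have hv₁ne : v₁ ≠ [] := ddot_ne_nil hE hv₁
  have hv₂ne : v₂ ≠ [] := ddot_ne_nil hE hv₂
  have hv₁1 : 1 ≤ v₁.length := List.length_pos_iff.mpr hv₁ne
  have hv₂1 : 1 ≤ v₂.length := List.length_pos_iff.mpr hv₂ne
  -- w₂ = w₁ ++ d
  have hp₁ : w₁ <+: w₂ := by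
    refine List.prefix_of_prefix_length_le (l₃ := w₂ ++ v₂ ++ x₂)
      ⟨v₁ ++ x₁, ?_⟩ ⟨v₂ ++ x₂, ?_⟩ hlt.le
    · rw [← append_assoc]; exact heq
    · rw [← append_assoc]
  obtain ⟨d, hd⟩ := hp₁
  have hdne : d ≠ [] := by
    rintro rfl; rw [append_nil] at hd; subst hd; exact absurd hlt (lt_irrefl _)
  have hdlen : w₂.length = w₁.length + d.length := by rw [← hd]; simp
  -- middle cancellation : v₁ ++ x₁ = d ++ v₂ ++ x₂
  have hmid : v₁ ++ x₁ = d ++ (v₂ ++ x₂) := by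
    apply List.append_cancel_left (as := w₁)
    simp only [← append_assoc]
    rw [hd]
    exact heq
  -- q < q'
  have hq : w₁.length + v₁.length < w₂.length + v₂.length := by
    by_contra hq
    push_neg at hq
    have hlen2 : d.length + v₂.length ≤ v₁.length := by omega
    have hpre : d ++ v₂ <+: v₁ := by
      refine List.prefix_of_prefix_length_le (l₃ := v₁ ++ x₁)
        ⟨x₂, ?_⟩ ⟨x₁, rfl⟩ (by simp only [length_append]; omega)
      rw [append_assoc]; exact hmid.symm
    have htl : d.tail ++ v₂ <+: v₁.tail := by
      have := tail_prefix_of_prefix hpre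
      rwa [List.tail_append_of_ne_nil hdne] at this
    obtain ⟨r, hr⟩ := htl
    exact ddot_not_infix hFac hE hv₂ ⟨d.tail, r, by rw [← hr, append_assoc]⟩ hv₁.2.2
  -- w₂ ++ v₂.dropLast = (w₁ ++ v₁) ++ e
  have hp₂ : w₁ ++ v₁ <+: w₂ ++ v₂.dropLast := by
    obtain ⟨c, hc⟩ := List.dropLast_prefix v₂
    refine List.prefix_of_prefix_length_le (l₃ := w₂ ++ v₂ ++ x₂)
      ⟨x₁, ?_⟩ ⟨c ++ x₂, ?_⟩ ?_
    · exact heq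
    · rw [append_assoc, append_assoc, ← append_assoc v₂.dropLast, hc, ← append_assoc]
    · simp only [length_append, length_dropLast]
      omega
  obtain ⟨e, he⟩ := hp₂
  -- v₁ ++ e = d ++ v₂.dropLast
  have hmid2 : v₁ ++ e = d ++ v₂.dropLast := by
    apply List.append_cancel_left (as := w₁)
    simp only [← append_assoc]
    rw [hd]
    exact he
  have hm : v₁.tail ++ e = d.tail ++ v₂.dropLast := by
    have := congrArg List.tail hmid2
    rwa [List.tail_append_of_ne_nil hv₁ne, List.tail_append_of_ne_nil hdne] at this
  have htaileq : v₁.tail ++ x₁ = d.tail ++ v₂ ++ x₂ := by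
    have := congrArg List.tail hmid
    rw [List.tail_append_of_ne_nil hv₁ne, List.tail_append_of_ne_nil hdne] at this
    rw [this, append_assoc]
  -- lengths
  have hlenu : (w₁ ++ v₁ ++ x₁).length = w₂.length + v₂.length + x₂.length := by
    rw [heq]; simp only [length_append]
  have hlenu' : (w₁ ++ v₁ ++ x₁).length = w₁.length + v₁.length + x₁.length := by
    simp only [length_append]
  -- existence of sc for the middle word
  have hmne : d.tail ++ v₂.dropLast ≠ [] :=
    fun h => ddot_dropLast_ne_nil hA hv₂ (List.append_eq_nil_iff.mp h).2
  obtain ⟨c, hcsc⟩ := exists_sc hE hA _ hmne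
  -- t₁ = c ++ v₂ :: t₂
  have hstep1 : IsSc L (d.tail ++ v₂ ++ x₂) (c ++ v₂ :: t₂) :=
    .step d.tail x₂ v₂ c t₂ hv₂ hcsc hb₂
  rw [← htaileq] at hstep1
  have ht₁ : t₁ = c ++ v₂ :: t₂ := by
    refine IH _ ?_ _ _ hb₁ hstep1
    simp only [length_append, length_tail, hlenu']
    omega
  -- s₂ = s₁ ++ v₁ :: c
  have hcsc' : IsSc L (v₁.tail ++ e) c := by rw [hm]; exact hcsc
  have hstep2 : IsSc L (w₁ ++ v₁ ++ e) (s₁ ++ v₁ :: c) :=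
    .step w₁ e v₁ s₁ c hv₁ ha₁ hcsc'
  have heq2 : w₁ ++ v₁ ++ e = w₂ ++ v₂.dropLast := he
  rw [heq2] at hstep2
  have hs₂ : s₂ = s₁ ++ v₁ :: c := by
    refine (IH _ ?_ _ _ hstep2 ha₂).symm
    simp only [length_append, length_dropLast, hlenu]
    omega
  rw [ht₁, hs₂]
  simp

lemma prefix_ddot_absurd (hE : [] ∉ L)
    (hFac : ∀ u w : List A, w ∈ L → u ≠ [] → u <:+: w → u ∈ L)
    {v₁ x₁ v₂ x₂ : List A} (hv₁ : v₁ ∈ Ddot L) (hv₂ : v₂ ∈ Ddot L)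
    (heq : v₁ ++ x₁ = v₂ ++ x₂) (hlt : v₁.length < v₂.length) : False := by
  have hpre : v₁ <+: v₂.dropLast := by
    refine List.prefix_of_prefix_length_le (l₃ := v₂ ++ x₂) ⟨x₁, heq⟩ ?_ ?_
    · obtain ⟨c, hc⟩ := List.dropLast_prefix v₂
      exact ⟨c ++ x₂, by rw [← append_assoc, hc]⟩
    · rw [length_dropLast]; omega
  exact ddot_not_infix hFac hE hv₁ hpre.isInfix hv₂.2.1

lemma sc_unique_aux (hE : [] ∉ L)
    (hFac : ∀ u w : List A, w ∈ L → u ≠ [] → u <:+: w → u ∈ L)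
    (hA : ∀ a : A, [a] ∈ L) :
    ∀ n (u : List A), u.length < n → ∀ s t, IsSc L u s → IsSc L u t → s = t := by
  intro n
  induction n with
  | zero => intro u h; exact absurd h (Nat.not_lt_zero _)
  | succ n ih =>
    intro u hlen s t hs ht
    rcases isSc_inv hs with ⟨huL, rfl⟩ | ⟨w₁, x₁, v₁, s₁, t₁, hv₁, ha₁, hb₁, rfl, rfl⟩
    · rcases isSc_inv ht with ⟨_, rfl⟩ | ⟨w₂, x₂, v₂, s₂, t₂, hv₂, _, _, rfl, rfl⟩
      · rfl
      · exact absurd (hFac v₂ _ huL (ddot_ne_nil hE hv₂) ⟨w₂, x₂, rfl⟩) hv₂.1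
    · rcases isSc_inv ht with ⟨huL, _⟩ | ⟨w₂, x₂, v₂, s₂, t₂, hv₂, ha₂, hb₂, heq, rfl⟩
      · exact absurd (hFac v₁ _ huL (ddot_ne_nil hE hv₁) ⟨w₁, x₁, rfl⟩) hv₁.1
      · have IH : ∀ u' : List A, u'.length < (w₁ ++ v₁ ++ x₁).length →
            ∀ s t : List (List A), IsSc L u' s → IsSc L u' t → s = t := by
          intro u' h' s t hs ht
          exact ih u' (by omega) s t hs ht
        rcases lt_trichotomy w₁.length w₂.length with h | h | h
        · exact step_lt hE hFac hA w₁ v₁ x₁ w₂ v₂ x₂ s₁ t₁ s₂ t₂ hv₁ hv₂ heq h IH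
            ha₁ hb₁ ha₂ hb₂
        · -- equal starts
          have heq' : w₁ ++ (v₁ ++ x₁) = w₂ ++ (v₂ ++ x₂) := by
            rw [← append_assoc, ← append_assoc]; exact heq
          obtain ⟨hw12, hvx⟩ := List.append_inj heq' h
          subst hw12
          have hv12 : v₁ = v₂ := by
            rcases lt_trichotomy v₁.length v₂.length with h' | h' | h'
            · exact absurd (prefix_ddot_absurd hE hFac hv₁ hv₂ hvx h') id
            · exact (List.append_inj hvx h').1
            · exact absurd (prefix_ddot_absurd hE hFac hv₂ hv₁ hvx.symm h') id
          subst hv12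
          obtain ⟨-, hx12⟩ := List.append_inj hvx rfl
          subst hx12
          have hv₁1 : 1 ≤ v₁.length := List.length_pos_iff.mpr (ddot_ne_nil hE hv₁)
          have e1 : s₁ = s₂ := by
            refine IH _ ?_ _ _ ha₁ ha₂
            simp only [length_append, length_dropLast]
            omega
          have e2 : t₁ = t₂ := by
            refine IH _ ?_ _ _ hb₁ hb₂
            simp only [length_append, length_tail]
            omega
          rw [e1, e2]
        · -- symmetric case
          have IH' : ∀ u' : List A, u'.length < (w₂ ++ v₂ ++ x₂).length →
              ∀ s t : List (List A), IsSc L u' s → IsSc L u' t → s = t := by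
            rw [← heq]; exact IH
          exact (step_lt hE hFac hA w₂ v₂ x₂ w₁ v₁ x₁ s₂ t₂ s₁ t₁ hv₂ hv₁ heq.symm h IH'
            ha₂ hb₂ ha₁ hb₁).symm

lemma sc_unique (hE : [] ∉ L)
    (hFac : ∀ u w : List A, w ∈ L → u ≠ [] → u <:+: w → u ∈ L)
    (hA : ∀ a : A, [a] ∈ L) {u : List A} {s t : List (List A)}
    (hs : IsSc L u s) (ht : IsSc L u t) : s = t :=
  sc_unique_aux hE hFac hA (u.length + 1) u (Nat.lt_succ_self _) s t hs ht

lemma getLastD_append_cons {α : Type*} (s₁ : List α) (v : α) (s₂ : List α) (d : α)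
    (h : s₂ ≠ []) : (s₁ ++ v :: s₂).getLastD d = s₂.getLastD d := by
  rw [List.getLastD_eq_getLast?, List.getLastD_eq_getLast?, List.getLast?_append]
  rcases s₂ with _ | ⟨a, l⟩
  · exact absurd rfl h
  · rw [List.getLast?_cons_cons]
    have : (a :: l).getLast?.isSome := by
      rw [List.getLast?_isSome]; simp
    obtain ⟨x, hx⟩ := Option.isSome_iff_exists.mp this
    rw [hx]; rfl

variable [Group G]

lemma part1 (hE : [] ∉ L)
    (hFac : ∀ u w : List A, w ∈ L → u ≠ [] → u <:+: w → u ∈ L)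
    (hA : ∀ a : A, [a] ∈ L) (f : List A → G) :
    ∀ (z : List A) (sz : List (List A)), IsSc L z sz →
    ∀ (w : List A) (swz swz0 : List (List A)),
      IsSc L (w ++ z) swz → IsSc L (w ++ sz.headI) swz0 →
      (swz.map f).prod = (swz0.map f).prod * (f sz.headI)⁻¹ * (sz.map f).prod := by
  intro z sz hsz
  induction hsz with
  | base z hz =>
    intro w swz swz0 hswz hswz0
    simp only [headI_cons] at hswz0 ⊢
    have h := sc_unique hE hFac hA hswz0 hswz
    rw [h]
    simp [mul_assoc]
  | step z' z'' v s₁ s₂ hv h₁ h₂ ih₁ ih₂ =>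
    intro w swz swz0 hswz hswz0
    have hs₁ne : s₁ ≠ [] := isSc_ne_nil h₁
    have hhead : (s₁ ++ v :: s₂).headI = s₁.headI := by
      rcases s₁ with _ | ⟨a, l⟩
      · exact absurd rfl hs₁ne
      · rfl
    have hvd := ddot_dropLast_ne_nil hA hv
    obtain ⟨t₁, ht₁⟩ := exists_sc hE hA (w ++ (z' ++ v.dropLast))
      (fun h => hvd (List.append_eq_nil_iff.mp (List.append_eq_nil_iff.mp h).2).2)
    have ht₁' : IsSc L ((w ++ z') ++ v.dropLast) t₁ := by rwa [append_assoc]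
    have hstep : IsSc L ((w ++ z') ++ v ++ z'') (t₁ ++ v :: s₂) :=
      .step (w ++ z') z'' v t₁ s₂ hv ht₁' h₂
    have hw' : (w ++ z') ++ v ++ z'' = w ++ (z' ++ v ++ z'') := by
      simp [append_assoc]
    rw [hw'] at hstep
    have huniq : swz = t₁ ++ v :: s₂ := sc_unique hE hFac hA hswz hstep
    rw [hhead] at hswz0
    have key := ih₁ w t₁ swz0 ht₁ hswz0
    rw [huniq, hhead]
    simp only [map_append, map_cons, prod_append, prod_cons, key]
    group

lemma part2 (hE : [] ∉ L)
    (hFac : ∀ u w : List A, w ∈ L → u ≠ [] → u <:+: w → u ∈ L)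
    (hA : ∀ a : A, [a] ∈ L) (f : List A → G) :
    ∀ (w : List A) (sw : List (List A)), IsSc L w sw →
    ∀ (z : List A) (swz swmz : List (List A)),
      IsSc L (w ++ z) swz → IsSc L (sw.getLastD [] ++ z) swmz →
      (swz.map f).prod = (sw.map f).prod * (f (sw.getLastD []))⁻¹ * (swmz.map f).prod := by
  intro w sw hsw
  induction hsw with
  | base w hwL =>
    intro z swz swmz hswz hswmz
    have hgl : ([w] : List (List A)).getLastD [] = w := rfl
    rw [hgl] at hswmz ⊢
    have h := sc_unique hE hFac hA hswmz hswz
    rw [h]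
    simp [mul_assoc]
  | step w' w'' v s₁ s₂ hv h₁ h₂ ih₁ ih₂ =>
    intro z swz swmz hswz hswmz
    have hs₂ne : s₂ ≠ [] := isSc_ne_nil h₂
    have hlast : (s₁ ++ v :: s₂).getLastD [] = s₂.getLastD [] :=
      getLastD_append_cons s₁ v s₂ [] hs₂ne
    have hvt := ddot_tail_ne_nil hA hv
    obtain ⟨t₂, ht₂⟩ := exists_sc hE hA ((v.tail ++ w'') ++ z)
      (fun h => hvt (List.append_eq_nil_iff.mp (List.append_eq_nil_iff.mp h).1).1)
    have ht₂' : IsSc L (v.tail ++ (w'' ++ z)) t₂ := by rwa [← append_assoc]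
    have hstep : IsSc L (w' ++ v ++ (w'' ++ z)) (s₁ ++ v :: t₂) :=
      .step w' (w'' ++ z) v s₁ t₂ hv h₁ ht₂'
    have hw' : w' ++ v ++ (w'' ++ z) = (w' ++ v ++ w'') ++ z := by
      simp [append_assoc]
    rw [hw'] at hstep
    have huniq : swz = s₁ ++ v :: t₂ := sc_unique hE hFac hA hswz hstep
    rw [hlast] at hswmz
    have key := ih₂ z t₂ swmz ht₂ hswmz
    rw [huniq, hlast]
    simp only [map_append, map_cons, prod_append, prod_cons, key]
    group

end Aux

/-- Lemma 1(1). Let `w, z ∈ A⁺`, let `z₀` be the first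
coordinate of `z` (its longest prefix in `L`) and `w_m` the last coordinate of
`w` (its longest suffix in `L`).  Then
`f̂(wz) = f̂(wz₀)·f(z₀)⁻¹·f̂(z)` and `f̂(wz) = f̂(w)·f(w_m)⁻¹·f̂(w_m z)` in `G`,
where for a word `u` with coordinate sequence `s`, `f̂(u)` is the product of the
`f`-values of all the coordinates of `u`. -/
theorem fhat_superposition [Nonempty A] [Group G] (L : Set (List A))
    (hE : [] ∉ L)
    (hFac : ∀ u w : List A, w ∈ L → u ≠ [] → u <:+: w → u ∈ L)
    (hA : ∀ a : A, [a] ∈ L)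
    (f : List A → G)
    (w z : List A) (hw : w ≠ []) (hz : z ≠ [])
    (sw sz swz swz0 swmz : List (List A))
    (hsw : IsSc L w sw) (hsz : IsSc L z sz)
    (hswz : IsSc L (w ++ z) swz)
    (hswz0 : IsSc L (w ++ sz.headI) swz0)
    (hswmz : IsSc L (sw.getLastD [] ++ z) swmz) :
    (swz.map f).prod = (swz0.map f).prod * (f sz.headI)⁻¹ * (sz.map f).prod ∧
    (swz.map f).prod =
      (sw.map f).prod * (f (sw.getLastD []))⁻¹ * (swmz.map f).prod :=
  ⟨part1 hE hFac hA f z sz hsz w swz swz0 hswz hswz0,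
   part2 hE hFac hA f w sw hsw z swz swmz hswz hswmz⟩
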